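/- Let C ≥ 2, d ≥ C, and labels y_1,…,y_n ∈ [C] such that every class occurs. Consider the minimization of Σ_{c∈[C]} ‖w_c‖² + ‖b‖² over (w_1,…,w_C, b, h_1,…,h_n) subject to min_{i∈[n]} q_i ≥ 1, Σ_{j∈[d]} (h_i)_j = 0 and Σ_{j∈[d]} (h_i)_j² = 1 for all i, where q_i = ⟨w_{y_i}, h_i⟩ + b_{y_i} − max_{c ≠ y_i}(⟨w_c, h_i⟩ + b_c). A point is a minimizer if and only if: the convex hull of {w_c}_{c∈[C]} forms a regular (C−1)-simplex (i.e. ‖w_{c_1} − w_{c_2}‖² = 2(C−1)/C for all distinct c_1, c_2), ‖w_c‖ = (C−1)/C for all c, Σ_{c∈[C]} w_c = 0, b = 0, h_i = (C/(C−1)) w_{y_i} for all i ∈ [n], and Σ_{j∈[d]} (w_c)_j = 0 for all c ∈ [C]. -/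

import Mathlib

open Finset

/-- The multi-class margin `q_i` of data point `i` with features `h`. -/
noncomputable def ncMargin {d C n : ℕ} (w : Fin C → EuclideanSpace ℝ (Fin d))
    (b : Fin C → ℝ) (y : Fin n → Fin C) (h : Fin n → EuclideanSpace ℝ (Fin d))
    (i : Fin n) : ℝ :=
  inner (𝕜 := ℝ) (w (y i)) (h i) + b (y i) -
    sSup {z : ℝ | ∃ c : Fin C, c ≠ y i ∧ z = inner (𝕜 := ℝ) (w c) (h i) + b c}

lemma nc_norm_sq_sum {d : ℕ} (x : EuclideanSpace ℝ (Fin d)) : ‖x‖^2 = ∑ j, x j ^ 2 := by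
  rw [EuclideanSpace.norm_eq, Real.sq_sqrt (by positivity)]
  simp [Real.norm_eq_abs, sq_abs]

lemma nc_margin_iff {d C n : ℕ} (hC : 2 ≤ C) (w : Fin C → EuclideanSpace ℝ (Fin d))
    (b : Fin C → ℝ) (y : Fin n → Fin C) (h : Fin n → EuclideanSpace ℝ (Fin d)) (i : Fin n) :
    1 ≤ ncMargin w b y h i ↔
      ∀ c, c ≠ y i → inner (𝕜 := ℝ) (w c) (h i) + b c + 1 ≤
        inner (𝕜 := ℝ) (w (y i)) (h i) + b (y i) := by
  set S : Set ℝ := {z : ℝ | ∃ c : Fin C, c ≠ y i ∧ z = inner (𝕜 := ℝ) (w c) (h i) + b c} with hS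
  have hne : S.Nonempty := by
    obtain ⟨c, hc⟩ := Fintype.exists_ne_of_one_lt_card (by simp only [Fintype.card_fin]; omega) (y i)
    exact ⟨_, c, hc, rfl⟩
  have hbdd : BddAbove S := by
    apply Set.Finite.bddAbove
    apply (Set.finite_range (fun c : Fin C => inner (𝕜 := ℝ) (w c) (h i) + b c)).subset
    rintro z ⟨c, _, rfl⟩; exact ⟨c, rfl⟩
  unfold ncMargin
  rw [le_sub_comm, csSup_le_iff hbdd hne]
  constructor
  · intro H c hc
    have := H _ ⟨c, hc, rfl⟩
    linarith
  · rintro H z ⟨c, hc, rfl⟩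
    have := H c hc
    linarith

set_option maxHeartbeats 2000000 in
lemma nc_core {d C n : ℕ} (hC : 2 ≤ C)
    (y : Fin n → Fin C) (hy : Function.Surjective y)
    (w : Fin C → EuclideanSpace ℝ (Fin d)) (b : Fin C → ℝ)
    (h : Fin n → EuclideanSpace ℝ (Fin d))
    (hq : ∀ i c, c ≠ y i → inner (𝕜 := ℝ) (w c) (h i) + b c + 1 ≤
        inner (𝕜 := ℝ) (w (y i)) (h i) + b (y i))
    (hmean : ∀ i, (∑ j, h i j) = 0)
    (hn : ∀ i, (∑ j, (h i j) ^ 2) = 1) :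
    ((C:ℝ)-1)^2 / C ≤ (∑ c, ‖w c‖ ^ 2) + ∑ c, b c ^ 2 ∧
    ((∑ c, ‖w c‖ ^ 2) + ∑ c, b c ^ 2 = ((C:ℝ)-1)^2 / C →
      ((∀ c₁ c₂ : Fin C, c₁ ≠ c₂ → ‖w c₁ - w c₂‖ ^ 2 = 2 * ((C : ℝ) - 1) / C) ∧
        (∀ c, ‖w c‖ = ((C : ℝ) - 1) / C) ∧ (∑ c, w c) = 0 ∧ b = 0 ∧
        (∀ i, h i = ((C : ℝ) / ((C : ℝ) - 1)) • w (y i)) ∧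
        (∀ c, (∑ j, w c j) = 0))) := by
  have hC1 : (1:ℝ) ≤ (C:ℝ) - 1 := by
    have : (2:ℝ) ≤ (C:ℝ) := by exact_mod_cast hC
    linarith
  have hCpos : (0:ℝ) < C := by linarith
  have hC0 : (C:ℝ) ≠ 0 := ne_of_gt hCpos
  set k : ℝ := ((C:ℝ)-1)/C with hkdef
  have hkpos : 0 < k := by positivity
  set S : EuclideanSpace ℝ (Fin d) := ∑ c, w c with hSdef
  set B : ℝ := ∑ c, b c with hBdef
  set m : EuclideanSpace ℝ (Fin d) := ((C:ℝ)⁻¹) • S with hmdef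
  set u : Fin C → EuclideanSpace ℝ (Fin d) := fun c => w c - m with hudef
  set t : Fin C → ℝ := fun c => b c - B / C with htdef
  have hnormh : ∀ i, ‖h i‖ = 1 := by
    intro i
    have h2 : ‖h i‖^2 = 1 := by rw [nc_norm_sq_sum]; exact hn i
    nlinarith [norm_nonneg (h i)]
  -- Step 1: averaged margin constraint
  have step1 : ∀ i, k - t (y i) ≤ inner (𝕜 := ℝ) (u (y i)) (h i) := by
    intro i
    have hsum : ∑ c ∈ univ.erase (y i), (inner (𝕜 := ℝ) (w c) (h i) + b c + 1)
        ≤ ∑ c ∈ univ.erase (y i), (inner (𝕜 := ℝ) (w (y i)) (h i) + b (y i)) :=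
      Finset.sum_le_sum (fun c hc => hq i c (Finset.ne_of_mem_erase hc))
    have hcard : ((univ.erase (y i)).card : ℝ) = (C:ℝ) - 1 := by
      rw [Finset.card_erase_of_mem (mem_univ _), card_univ, Fintype.card_fin]
      have : 1 ≤ C := le_trans one_le_two hC
      push_cast [Nat.cast_sub this]
      ring
    have hL : ∑ c ∈ univ.erase (y i), (inner (𝕜 := ℝ) (w c) (h i) + b c + 1)
        = (inner (𝕜 := ℝ) S (h i) - inner (𝕜 := ℝ) (w (y i)) (h i)) + (B - b (y i))
          + ((C:ℝ) - 1) := by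
      rw [Finset.sum_add_distrib, Finset.sum_add_distrib, Finset.sum_const,
        nsmul_eq_mul, mul_one, hcard,
        Finset.sum_erase_eq_sub (mem_univ (y i)), Finset.sum_erase_eq_sub (mem_univ (y i)),
        ← hBdef, ← sum_inner, ← hSdef]
    have hR : ∑ c ∈ univ.erase (y i), (inner (𝕜 := ℝ) (w (y i)) (h i) + b (y i))
        = ((C:ℝ) - 1) * (inner (𝕜 := ℝ) (w (y i)) (h i) + b (y i)) := by
      rw [Finset.sum_const, nsmul_eq_mul, hcard]
    rw [hL, hR] at hsum
    have hu : inner (𝕜 := ℝ) (u (y i)) (h i)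
        = inner (𝕜 := ℝ) (w (y i)) (h i) - (C:ℝ)⁻¹ * inner (𝕜 := ℝ) S (h i) := by
      simp only [hudef, hmdef, inner_sub_left, real_inner_smul_left]
    rw [hu]
    rw [← mul_le_mul_iff_of_pos_right hCpos]
    have e1 : (k - t (y i)) * (C:ℝ) = ((C:ℝ) - 1) - (C:ℝ) * b (y i) + B := by
      simp only [htdef, hkdef]; field_simp; ring
    have e2 : (inner (𝕜:=ℝ) (w (y i)) (h i) - (C:ℝ)⁻¹ * inner (𝕜:=ℝ) S (h i)) * (C:ℝ)
        = (C:ℝ) * inner (𝕜:=ℝ) (w (y i)) (h i) - inner (𝕜:=ℝ) S (h i) := by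
      field_simp
    rw [e1, e2]; nlinarith [hsum]
  -- Step 2: per-class norm bound via Cauchy-Schwarz
  have step2 : ∀ a, k - t a ≤ ‖u a‖ := by
    intro a
    obtain ⟨i, rfl⟩ := hy a
    calc k - t (y i) ≤ inner (𝕜 := ℝ) (u (y i)) (h i) := step1 i
      _ ≤ ‖u (y i)‖ * ‖h i‖ := real_inner_le_norm _ _
      _ = ‖u (y i)‖ := by rw [hnormh i, mul_one]
  -- Step 3: per-class quadratic bound
  have step3 : ∀ a, k^2 - 2*k*t a ≤ ‖u a‖^2 + t a ^2 := by
    intro a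
    have h1 := step2 a
    have h2 : (0:ℝ) ≤ ‖u a‖ := norm_nonneg _
    rcases le_or_gt (t a) k with hle | hlt
    · nlinarith [mul_self_le_mul_self (by linarith : (0:ℝ) ≤ k - t a) h1, sq_nonneg (t a)]
    · nlinarith [sq_nonneg (‖u a‖), hkpos]
  have hsum_t : ∑ c, t c = 0 := by
    simp only [htdef, Finset.sum_sub_distrib, Finset.sum_const, card_univ, Fintype.card_fin,
      nsmul_eq_mul, ← hBdef]
    field_simp; ring
  have hsum_u : ∑ c, u c = 0 := by
    simp only [hudef, Finset.sum_sub_distrib, Finset.sum_const, card_univ, Fintype.card_fin,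
      ← hSdef, hmdef]
    rw [← Nat.cast_smul_eq_nsmul ℝ, smul_smul, mul_inv_cancel₀ hC0, one_smul, sub_self]
  -- decompositions
  have hw_decomp : ∑ c, ‖w c‖^2 = (∑ c, ‖u c‖^2) + (C:ℝ) * ‖m‖^2 := by
    have hpt : ∀ c : Fin C, ‖w c‖^2 = ‖u c‖^2 + 2 * inner (𝕜 := ℝ) (u c) m + ‖m‖^2 := by
      intro c
      rw [show w c = u c + m from by simp [hudef]]
      exact norm_add_sq_real _ _
    rw [Finset.sum_congr rfl (fun c _ => hpt c), Finset.sum_add_distrib, Finset.sum_add_distrib,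
      Finset.sum_const, card_univ, Fintype.card_fin, ← Finset.mul_sum, ← sum_inner, hsum_u,
      inner_zero_left, nsmul_eq_mul]
    ring
  have hb_decomp : ∑ c, b c ^2 = (∑ c, t c ^2) + (C:ℝ) * (B/C)^2 := by
    have hpt : ∀ c : Fin C, b c ^2 = t c ^2 + 2 * t c * (B/C) + (B/C)^2 := by
      intro c
      have : b c = t c + B/C := by simp [htdef]
      rw [this]; ring
    rw [Finset.sum_congr rfl (fun c _ => hpt c), Finset.sum_add_distrib, Finset.sum_add_distrib,
      Finset.sum_const, card_univ, Fintype.card_fin, nsmul_eq_mul]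
    have : ∑ c, 2 * t c * (B/C) = 0 := by
      rw [show (fun c => 2 * t c * (B/C)) = (fun c => (2*(B/C)) * t c) from by funext c; ring]
      rw [← Finset.mul_sum, hsum_t, mul_zero]
    rw [this]; ring
  have hCk : (C:ℝ) * k^2 = ((C:ℝ)-1)^2 / C := by
    rw [hkdef]; field_simp
  have main_ineq : (C:ℝ) * k^2 ≤ ∑ c, (‖u c‖^2 + t c ^2) := by
    have : ∑ c : Fin C, (k^2 - 2*k*t c) = (C:ℝ) * k^2 := by
      rw [Finset.sum_sub_distrib, Finset.sum_const, card_univ, Fintype.card_fin, nsmul_eq_mul,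
        show (fun c => 2*k*t c) = (fun c => (2*k)*t c) from by funext c; ring, ← Finset.mul_sum,
        hsum_t, mul_zero, sub_zero]
    rw [← this]
    exact Finset.sum_le_sum (fun c _ => step3 c)
  have obj_eq : (∑ c, ‖w c‖ ^ 2) + ∑ c, b c ^ 2
      = (∑ c, (‖u c‖^2 + t c ^2)) + ((C:ℝ) * ‖m‖^2 + (C:ℝ) * (B/C)^2) := by
    rw [hw_decomp, hb_decomp, Finset.sum_add_distrib]; ring
  have extra_nonneg : 0 ≤ (C:ℝ) * ‖m‖^2 + (C:ℝ) * (B/C)^2 := by positivity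
  constructor
  · rw [← hCk, obj_eq]; linarith
  · intro heq
    -- equality analysis
    rw [obj_eq, ← hCk] at heq
    have hz1 : (C:ℝ) * ‖m‖^2 + (C:ℝ) * (B/C)^2 = 0 := by linarith
    have hz2 : ∑ c, (‖u c‖^2 + t c ^2) = (C:ℝ)*k^2 := by linarith
    have hm0 : m = 0 := by
      have h1 : ‖m‖^2 = 0 := by nlinarith [sq_nonneg (B/C), sq_nonneg ‖m‖]
      have := (pow_eq_zero_iff (two_ne_zero)).mp h1
      exact norm_eq_zero.mp this
    have hB0 : B = 0 := by
      have h1 : (B/C)^2 = 0 := by nlinarith [sq_nonneg (B/C), sq_nonneg ‖m‖]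
      have := (pow_eq_zero_iff (two_ne_zero)).mp h1
      field_simp at this
      simpa using this
    have hS0 : S = 0 := by
      have : (C:ℝ)⁻¹ • S = 0 := hm0
      rcases smul_eq_zero.mp this with h1 | h1
      · exact absurd h1 (inv_ne_zero hC0)
      · exact h1
    have huw : ∀ c, u c = w c := by
      intro c; simp [hudef, hm0]
    -- each term is tight
    have hterm : ∀ c : Fin C, ‖u c‖^2 + t c ^2 - (k^2 - 2*k*t c) = 0 := by
      have hsum0 : ∑ c : Fin C, (‖u c‖^2 + t c ^2 - (k^2 - 2*k*t c)) = 0 := by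
        rw [Finset.sum_sub_distrib, hz2]
        have : ∑ c : Fin C, (k^2 - 2*k*t c) = (C:ℝ) * k^2 := by
          rw [Finset.sum_sub_distrib, Finset.sum_const, card_univ, Fintype.card_fin, nsmul_eq_mul,
            show (fun c => 2*k*t c) = (fun c => (2*k)*t c) from by funext c; ring, ← Finset.mul_sum,
            hsum_t, mul_zero, sub_zero]
        rw [this, sub_self]
      intro c
      have := (Finset.sum_eq_zero_iff_of_nonneg
        (fun c _ => by have := step3 c; linarith)).mp hsum0 c (mem_univ c)
      exact this
    have ht0 : ∀ c, t c = 0 := by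
      intro c
      have he := hterm c
      have h1 := step2 c
      have h2 : (0:ℝ) ≤ ‖u c‖ := norm_nonneg _
      rcases le_or_gt (t c) k with hle | hlt
      · nlinarith [mul_self_le_mul_self (by linarith : (0:ℝ) ≤ k - t c) h1]
      · nlinarith
    have hun : ∀ c, ‖u c‖ = k := by
      intro c
      have he := hterm c
      rw [ht0 c] at he
      have : ‖u c‖^2 = k^2 := by nlinarith
      calc ‖u c‖ = Real.sqrt (‖u c‖^2) := (Real.sqrt_sq (norm_nonneg _)).symm
        _ = Real.sqrt (k^2) := by rw [this]
        _ = k := Real.sqrt_sq hkpos.le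
    have hb0 : b = 0 := by
      funext c
      have := ht0 c
      simp only [htdef, hB0, zero_div, sub_zero] at this
      exact this
    have hwn : ∀ c, ‖w c‖ = k := fun c => by rw [← huw c]; exact hun c
    -- h formula
    have hhw : ∀ i, h i = ((C:ℝ)/((C:ℝ)-1)) • w (y i) := by
      intro i
      have h1 : k ≤ inner (𝕜 := ℝ) (w (y i)) (h i) := by
        have := step1 i
        rw [huw, ht0] at this
        linarith
      have h2 : inner (𝕜 := ℝ) (w (y i)) (h i) ≤ k := by
        calc inner (𝕜 := ℝ) (w (y i)) (h i) ≤ ‖w (y i)‖ * ‖h i‖ := real_inner_le_norm _ _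
          _ = k := by rw [hwn, hnormh, mul_one]
      have heq2 : inner (𝕜 := ℝ) (w (y i)) (h i) = ‖w (y i)‖ * ‖h i‖ := by
        rw [hwn, hnormh, mul_one]; linarith
      have := inner_eq_norm_mul_iff_real.mp heq2
      rw [hnormh, hwn, one_smul] at this
      have hk1 : ((C:ℝ)/((C:ℝ)-1)) * k = 1 := by
        rw [hkdef]; field_simp
      calc h i = (1:ℝ) • h i := (one_smul _ _).symm
        _ = (((C:ℝ)/((C:ℝ)-1)) * k) • h i := by rw [hk1]
        _ = ((C:ℝ)/((C:ℝ)-1)) • (k • h i) := by rw [mul_smul]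
        _ = ((C:ℝ)/((C:ℝ)-1)) • w (y i) := by rw [← this]
    -- pairwise inner products
    have hinner : ∀ c₁ c₂ : Fin C, c₁ ≠ c₂ → inner (𝕜 := ℝ) (w c₁) (w c₂) = k^2 - k := by
      have key : ∀ a c : Fin C, c ≠ a → inner (𝕜 := ℝ) (w c) (w a) ≤ k^2 - k := by
        intro a c hca
        obtain ⟨i, hi⟩ := hy a
        have := hq i c (by rw [hi]; exact hca)
        rw [hi, hb0] at this
        simp only [Pi.zero_apply, add_zero] at this
        rw [hhw i, hi, real_inner_smul_right, real_inner_smul_right,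
          real_inner_self_eq_norm_sq, hwn] at this
        have hk1 : ((C:ℝ)/((C:ℝ)-1)) * k^2 = k := by
          rw [hkdef]; field_simp
        rw [hk1] at this
        have hκpos : 0 < (C:ℝ)/((C:ℝ)-1) := by positivity
        nlinarith
      intro c₁ c₂ hne
      -- sum over c ≠ c₂ of (k^2 - k - inner) = 0
      have hsum0 : ∑ c ∈ univ.erase c₂, ((k^2 - k) - inner (𝕜 := ℝ) (w c) (w c₂)) = 0 := by
        rw [Finset.sum_sub_distrib, Finset.sum_const, Finset.card_erase_of_mem (mem_univ _),
          card_univ, Fintype.card_fin]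
        have hinnersum : ∑ c ∈ univ.erase c₂, inner (𝕜 := ℝ) (w c) (w c₂)
            = -(k^2) := by
          rw [Finset.sum_erase_eq_sub (mem_univ c₂), ← sum_inner, ← hSdef, hS0, inner_zero_left,
            real_inner_self_eq_norm_sq, hwn]
          ring
        rw [hinnersum]
        have hcard : ((C - 1 : ℕ) : ℝ) = (C:ℝ) - 1 := by
          have : 1 ≤ C := le_trans one_le_two hC
          push_cast [Nat.cast_sub this]; ring
        rw [nsmul_eq_mul, hcard, hkdef]
        field_simp; ring
      have := (Finset.sum_eq_zero_iff_of_nonneg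
        (fun c hc => by
          have := key c₂ c (Finset.ne_of_mem_erase hc)
          linarith)).mp hsum0 c₁ (Finset.mem_erase.mpr ⟨hne, mem_univ _⟩)
      linarith
    refine ⟨?_, ?_, ?_, hb0, hhw, ?_⟩
    · intro c₁ c₂ hne
      rw [norm_sub_sq_real, hwn, hwn, hinner c₁ c₂ hne, hkdef]
      field_simp; ring
    · intro c; rw [hwn c, hkdef]
    · exact hS0
    · intro c
      obtain ⟨i, rfl⟩ := hy c
      have hm := hmean i
      rw [hhw i] at hm
      have : ∑ j, (((C:ℝ)/((C:ℝ)-1)) • w (y i)) j = ((C:ℝ)/((C:ℝ)-1)) * ∑ j, w (y i) j := by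
        simp [PiLp.smul_apply, Finset.mul_sum]
      rw [this] at hm
      rcases mul_eq_zero.mp hm with h1 | h1
      · exfalso
        have : ((C:ℝ)/((C:ℝ)-1)) > 0 := by positivity
        linarith
      · exact h1

/-- Structure implies feasibility and the optimal objective value. -/
lemma nc_struct_feasible {d C n : ℕ} (hC : 2 ≤ C)
    (y : Fin n → Fin C)
    (w : Fin C → EuclideanSpace ℝ (Fin d)) (b : Fin C → ℝ)
    (h : Fin n → EuclideanSpace ℝ (Fin d))
    (hdist : ∀ c₁ c₂ : Fin C, c₁ ≠ c₂ → ‖w c₁ - w c₂‖ ^ 2 = 2 * ((C : ℝ) - 1) / C)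
    (hnw : ∀ c, ‖w c‖ = ((C : ℝ) - 1) / C)
    (hb : b = 0)
    (hh : ∀ i, h i = ((C : ℝ) / ((C : ℝ) - 1)) • w (y i))
    (hws : ∀ c, (∑ j, w c j) = 0) :
    ((∀ i c, c ≠ y i → inner (𝕜 := ℝ) (w c) (h i) + b c + 1 ≤
        inner (𝕜 := ℝ) (w (y i)) (h i) + b (y i)) ∧
      (∀ i, (∑ j, h i j) = 0) ∧ (∀ i, (∑ j, (h i j) ^ 2) = 1)) ∧
    (∑ c, ‖w c‖ ^ 2) + ∑ c, b c ^ 2 = ((C:ℝ)-1)^2 / C := by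
  have hC1 : (1:ℝ) ≤ (C:ℝ) - 1 := by
    have : (2:ℝ) ≤ (C:ℝ) := by exact_mod_cast hC
    linarith
  have hCpos : (0:ℝ) < C := by linarith
  have hC0 : (C:ℝ) ≠ 0 := ne_of_gt hCpos
  have hC10 : (C:ℝ) - 1 ≠ 0 := by linarith
  set k : ℝ := ((C:ℝ)-1)/C with hkdef
  set κ : ℝ := (C:ℝ)/((C:ℝ)-1) with hκdef
  have hκk : κ * k = 1 := by rw [hκdef, hkdef]; field_simp
  have hinner : ∀ c₁ c₂ : Fin C, c₁ ≠ c₂ → inner (𝕜 := ℝ) (w c₁) (w c₂) = k^2 - k := by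
    intro c₁ c₂ hne
    have hd := hdist c₁ c₂ hne
    rw [norm_sub_sq_real, hnw, hnw] at hd
    have h2k : 2 * ((C:ℝ) - 1) / C = 2 * k := by rw [hkdef]; ring
    rw [h2k] at hd
    linarith
  refine ⟨⟨?_, ?_, ?_⟩, ?_⟩
  · intro i c hc
    rw [hb, hh i]
    simp only [Pi.zero_apply, add_zero]
    rw [real_inner_smul_right, real_inner_smul_right, real_inner_self_eq_norm_sq, hnw,
      hinner c (y i) hc]
    have e1 : κ * (((C:ℝ)-1)/C)^2 = k := by
      rw [hκdef, hkdef]; field_simp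
    have e2 : κ * (k^2 - k) = k - 1 := by
      have : κ * (k^2 - k) = κ * k * k - κ * k := by ring
      rw [this, hκk]; ring
    rw [e1, e2]
    linarith
  · intro i
    rw [hh i]
    have : ∑ j, (κ • w (y i)) j = κ * ∑ j, w (y i) j := by
      simp [PiLp.smul_apply, Finset.mul_sum]
    rw [this, hws, mul_zero]
  · intro i
    have : ∑ j, (h i j)^2 = ‖h i‖^2 := (nc_norm_sq_sum _).symm
    rw [this, hh i, norm_smul, Real.norm_eq_abs, hnw]
    have hκpos : 0 < κ := by rw [hκdef]; positivity
    rw [abs_of_pos hκpos]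
    rw [mul_pow]
    nlinarith [hκk]
  · rw [hb]
    simp only [Pi.zero_apply, ne_eq, OfNat.ofNat_ne_zero, not_false_eq_true, zero_pow,
      Finset.sum_const, smul_zero, add_zero]
    rw [Finset.sum_congr rfl (fun c _ => by rw [hnw c])]
    rw [Finset.sum_const, card_univ, Fintype.card_fin, nsmul_eq_mul]
    rw [hkdef]  -- maybe not needed
    field_simp

lemma nc_cnt {d C : ℕ} (hdC : C ≤ d) (B : ℝ) :
    ∑ j : Fin d, (if (j:ℕ) < C then B else 0) = (C:ℝ) * B := by
  rw [Fin.sum_univ_eq_sum_range (fun j => if j < C then B else 0) d]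
  rw [← Finset.sum_filter]
  have : (Finset.range d).filter (fun j => j < C) = Finset.range C := by
    ext j; simp only [Finset.mem_filter, Finset.mem_range]; omega
  rw [this, Finset.sum_const, Finset.card_range, nsmul_eq_mul]

lemma nc_single {d C : ℕ} (hdC : C ≤ d) (c : Fin C) (f : Fin d → ℝ) :
    ∑ j : Fin d, (if (j:ℕ) = (c:ℕ) then f j else 0) = f (Fin.castLE hdC c) := by
  have : ∀ j : Fin d, ((j:ℕ) = (c:ℕ)) ↔ j = Fin.castLE hdC c := by
    intro j; rw [Fin.ext_iff]; simp [Fin.castLE]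
  rw [Finset.sum_congr rfl (fun j _ => by rw [if_congr (this j) rfl rfl])]
  simp

lemma nc_sum_ind {d C : ℕ} (hdC : C ≤ d) (c : Fin C) (A B : ℝ) :
    ∑ j : Fin d, (if (j:ℕ) = (c:ℕ) then A else if (j:ℕ) < C then B else 0)
      = A + ((C:ℝ) - 1) * B := by
  have hpt : ∀ j : Fin d, (if (j:ℕ) = (c:ℕ) then A else if (j:ℕ) < C then B else 0)
      = (if (j:ℕ) = (c:ℕ) then A - B else 0) + (if (j:ℕ) < C then B else 0) := by
    intro j
    by_cases h1 : (j:ℕ) = (c:ℕ)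
    · have h2 : (j:ℕ) < C := h1 ▸ c.isLt
      simp [h1, h2]
    · simp [h1]
  rw [Finset.sum_congr rfl (fun j _ => hpt j), Finset.sum_add_distrib,
    nc_single hdC c (fun _ => A - B), nc_cnt hdC]
  ring

lemma nc_exists_struct {d C : ℕ} (hC : 2 ≤ C) (hdC : C ≤ d) :
    ∃ w0 : Fin C → EuclideanSpace ℝ (Fin d),
      (∀ c₁ c₂ : Fin C, c₁ ≠ c₂ → ‖w0 c₁ - w0 c₂‖ ^ 2 = 2 * ((C : ℝ) - 1) / C) ∧
      (∀ c, ‖w0 c‖ = ((C : ℝ) - 1) / C) ∧ (∀ c, (∑ j, w0 c j) = 0) := by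
  have hC1 : (1:ℝ) ≤ (C:ℝ) - 1 := by
    have : (2:ℝ) ≤ (C:ℝ) := by exact_mod_cast hC
    linarith
  have hCpos : (0:ℝ) < C := by linarith
  have hC0 : (C:ℝ) ≠ 0 := ne_of_gt hCpos
  set k : ℝ := ((C:ℝ)-1)/C with hkdef
  have hkpos : 0 < k := by positivity
  set α : ℝ := Real.sqrt k with hαdef
  have hα2 : α^2 = k := Real.sq_sqrt hkpos.le
  set w0 : Fin C → EuclideanSpace ℝ (Fin d) := fun c => WithLp.toLp 2 (fun j : Fin d =>
    α * ((if (j:ℕ) = (c:ℕ) then 1 else 0) - (if (j:ℕ) < C then (1:ℝ)/C else 0))) with hw0def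
  have happ : ∀ (c : Fin C) (j : Fin d),
      w0 c j = α * ((if (j:ℕ) = (c:ℕ) then 1 else 0) - (if (j:ℕ) < C then (1:ℝ)/C else 0)) :=
    fun c j => rfl
  refine ⟨w0, ?_, ?_, ?_⟩
  · -- distances
    intro c₁ c₂ hne
    have hvalne : (c₁:ℕ) ≠ (c₂:ℕ) := fun hh => hne (Fin.ext hh)
    rw [nc_norm_sq_sum]
    have hpt : ∀ j : Fin d, ((w0 c₁ - w0 c₂) j)^2
        = α^2 * ((if (j:ℕ) = (c₁:ℕ) then 1 else 0) + (if (j:ℕ) = (c₂:ℕ) then 1 else 0)) := by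
      intro j
      have : (w0 c₁ - w0 c₂) j = w0 c₁ j - w0 c₂ j := rfl
      rw [this, happ, happ]
      by_cases h1 : (j:ℕ) = (c₁:ℕ) <;> by_cases h2 : (j:ℕ) = (c₂:ℕ)
      · exact absurd (h1 ▸ h2) hvalne
      · rw [if_pos h1, if_neg h2]; ring
      · rw [if_neg h1, if_pos h2]; ring
      · rw [if_neg h1, if_neg h2]; ring
    rw [Finset.sum_congr rfl (fun j _ => hpt j), ← Finset.mul_sum, Finset.sum_add_distrib,
      nc_single hdC c₁ (fun _ => (1:ℝ)), nc_single hdC c₂ (fun _ => (1:ℝ)), hα2, hkdef]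
    ring
  · -- norms
    intro c
    have hsq : ‖w0 c‖^2 = k^2 := by
      rw [nc_norm_sq_sum]
      have hpt : ∀ j : Fin d, (w0 c j)^2
          = α^2 * (if (j:ℕ) = (c:ℕ) then (1 - (1:ℝ)/C)^2 else if (j:ℕ) < C then ((1:ℝ)/C)^2 else 0) := by
        intro j
        rw [happ]
        by_cases h1 : (j:ℕ) = (c:ℕ)
        · have h2 : (j:ℕ) < C := h1 ▸ c.isLt
          simp only [if_pos h1, if_pos h2]; ring
        · simp only [if_neg h1]
          by_cases h2 : (j:ℕ) < C
          · simp only [if_pos h2]; ring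
          · simp only [if_neg h2]; ring
      rw [Finset.sum_congr rfl (fun j _ => hpt j), ← Finset.mul_sum, nc_sum_ind hdC, hα2, hkdef]
      field_simp
      ring
    calc ‖w0 c‖ = Real.sqrt (‖w0 c‖^2) := (Real.sqrt_sq (norm_nonneg _)).symm
      _ = Real.sqrt (k^2) := by rw [hsq]
      _ = ((C:ℝ)-1)/C := Real.sqrt_sq hkpos.le
  · -- coordinate sums
    intro c
    have hpt : ∀ j : Fin d, w0 c j
        = α * (if (j:ℕ) = (c:ℕ) then (1 - (1:ℝ)/C) else if (j:ℕ) < C then -((1:ℝ)/C) else 0) := by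
      intro j
      rw [happ]
      by_cases h1 : (j:ℕ) = (c:ℕ)
      · have h2 : (j:ℕ) < C := h1 ▸ c.isLt
        simp only [if_pos h1, if_pos h2]
      · simp only [if_neg h1]
        by_cases h2 : (j:ℕ) < C
        · simp only [if_pos h2]; ring
        · simp only [if_neg h2]; ring
    rw [Finset.sum_congr rfl (fun j _ => hpt j), ← Finset.mul_sum, nc_sum_ind hdC]
    have : (1 - (1:ℝ)/C) + ((C:ℝ)-1) * -((1:ℝ)/C) = 0 := by field_simp; ring
    rw [this, mul_zero]


/-- Lemma H.5 (characterization of global optima of the implicit optimization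
problem with layer-normalized features, i.e. Neural Collapse): `(w,b,h)`
minimizes `Σ_c ‖w_c‖² + ‖b‖²` subject to `min_i q_i ≥ 1`, `Σ_j (h_i)_j = 0` and
`Σ_j (h_i)_j² = 1` iff the `w_c` form a regular `(C−1)`-simplex with
`‖w_c‖ = (C−1)/C`, `Σ_c w_c = 0`, `b = 0`, `h_i = (C/(C−1)) w_{y_i}`, and
`Σ_j (w_c)_j = 0` for all `c`. -/
theorem stmt_16 {d C n : ℕ} (hC : 2 ≤ C) (hdC : C ≤ d)
    (y : Fin n → Fin C) (hy : Function.Surjective y)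
    (w : Fin C → EuclideanSpace ℝ (Fin d)) (b : Fin C → ℝ)
    (h : Fin n → EuclideanSpace ℝ (Fin d)) :
    (((∀ i, 1 ≤ ncMargin w b y h i) ∧ (∀ i, (∑ j, h i j) = 0) ∧
        (∀ i, (∑ j, (h i j) ^ 2) = 1)) ∧
      ∀ (w' : Fin C → EuclideanSpace ℝ (Fin d)) (b' : Fin C → ℝ)
        (h' : Fin n → EuclideanSpace ℝ (Fin d)),
        ((∀ i, 1 ≤ ncMargin w' b' y h' i) ∧ (∀ i, (∑ j, h' i j) = 0) ∧
          (∀ i, (∑ j, (h' i j) ^ 2) = 1)) →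
        (∑ c, ‖w c‖ ^ 2) + ∑ c, b c ^ 2 ≤ (∑ c, ‖w' c‖ ^ 2) + ∑ c, b' c ^ 2) ↔
    ((∀ c₁ c₂ : Fin C, c₁ ≠ c₂ →
        ‖w c₁ - w c₂‖ ^ 2 = 2 * ((C : ℝ) - 1) / C) ∧
      (∀ c, ‖w c‖ = ((C : ℝ) - 1) / C) ∧ (∑ c, w c) = 0 ∧ b = 0 ∧
      (∀ i, h i = ((C : ℝ) / ((C : ℝ) - 1)) • w (y i)) ∧
      (∀ c, (∑ j, w c j) = 0)) := by
  constructor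
  · rintro ⟨⟨hq, hmean, hnorm⟩, hmin⟩
    have hq' : ∀ i c, c ≠ y i → inner (𝕜 := ℝ) (w c) (h i) + b c + 1 ≤
        inner (𝕜 := ℝ) (w (y i)) (h i) + b (y i) :=
      fun i c hc => (nc_margin_iff hC w b y h i).mp (hq i) c hc
    obtain ⟨w0, hd0, hn0, hws0⟩ := nc_exists_struct (d := d) hC hdC
    obtain ⟨⟨hq0, hm0, hn0'⟩, hval0⟩ :=
      nc_struct_feasible hC y w0 (0 : Fin C → ℝ)
        (fun i => ((C : ℝ) / ((C : ℝ) - 1)) • w0 (y i)) hd0 hn0 rfl (fun i => rfl) hws0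
    have hub := hmin w0 (0 : Fin C → ℝ) (fun i => ((C : ℝ) / ((C : ℝ) - 1)) • w0 (y i))
      ⟨fun i => (nc_margin_iff hC w0 _ y _ i).mpr (fun c hc => hq0 i c hc), hm0, hn0'⟩
    rw [hval0] at hub
    obtain ⟨hlb, hrig⟩ := nc_core hC y hy w b h hq' hmean hnorm
    exact hrig (le_antisymm hub hlb)
  · rintro ⟨hdist, hnw, hsum, hb, hhf, hws⟩
    obtain ⟨⟨hq0, hm0, hn0⟩, hval⟩ := nc_struct_feasible hC y w b h hdist hnw hb hhf hws
    refine ⟨⟨fun i => (nc_margin_iff hC w b y h i).mpr (fun c hc => hq0 i c hc), hm0, hn0⟩, ?_⟩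
    rintro w' b' h' ⟨hq', hm', hn'⟩
    have hq'' : ∀ i c, c ≠ y i → inner (𝕜 := ℝ) (w' c) (h' i) + b' c + 1 ≤
        inner (𝕜 := ℝ) (w' (y i)) (h' i) + b' (y i) :=
      fun i c hc => (nc_margin_iff hC w' b' y h' i).mp (hq' i) c hc
    rw [hval]
    exact (nc_core hC y hy w' b' h' hq'' hm' hn').1
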